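/- The function f : c_c → ℝ defined by f(x) = Σ_{n=1}^∞ (n²/2)(x_n − n^{-2})² is discontinuous at every point of c_c with respect to the ℓ² norm. -/

import Mathlib

open scoped ENNReal

noncomputable section

abbrev ell2 : Type := lp (fun _ : ℕ => ℝ) 2

lemma memℓp_of_finite_support {x : ℕ → ℝ} (h : (Function.support x).Finite) :
    Memℓp x 2 := by
  apply memℓp_gen
  apply summable_of_finite_support
  refine h.subset ?_
  intro n hn
  simp only [Function.mem_support] at hn ⊢
  intro h0
  exact hn (by simp [h0])

def ccSubmodule : Submodule ℝ ell2 where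
  carrier := {x | (Function.support fun n => (x : ℕ → ℝ) n).Finite}
  add_mem' := by
    intro a b ha hb
    refine Set.Finite.subset (ha.union hb) ?_
    intro n hn
    simp only [Function.mem_support, Set.mem_union] at hn ⊢
    by_contra h
    push_neg at h
    exact hn (by simp [lp.coeFn_add, h.1, h.2])
  zero_mem' := by
    simp only [Set.mem_setOf_eq]
    convert Set.finite_empty
    ext n
    simp [lp.coeFn_zero]
  smul_mem' := by
    intro c a ha
    refine Set.Finite.subset ha ?_
    intro n hn
    simp only [Function.mem_support] at hn ⊢
    intro h
    exact hn (by simp [lp.coeFn_smul, h])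

abbrev cc : Type := ccSubmodule

def seqOf (x : cc) : ℕ → ℝ := fun n => ((x : ell2) : ℕ → ℝ) n

def fSeq (x : ℕ → ℝ) : ℝ :=
  ∑' n : ℕ, (((n : ℝ) + 1) ^ 2 / 2) * (x n - (((n : ℝ) + 1) ^ 2)⁻¹) ^ 2

def fcc (x : cc) : ℝ := fSeq (seqOf x)

/-- The standard unit sequence `e_n` as an element of `c_c`. -/
def eVec (n : ℕ) : cc :=
  ⟨lp.single 2 n (1 : ℝ), by
    refine Set.Finite.subset (Set.finite_singleton n) ?_
    intro m hm
    simp only [Function.mem_support] at hm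
    by_contra hmn
    exact hm (lp.single_apply_ne 2 n _ (by simpa using hmn))⟩

/-- The backward-difference operation on raw sequences, with `x_{-1} := 0`. -/
def Aseq (x : ℕ → ℝ) : ℕ → ℝ := fun n => x n - (if n = 0 then 0 else x (n - 1))

lemma support_Aseq {x : ℕ → ℝ} (h : (Function.support x).Finite) :
    (Function.support (Aseq x)).Finite := by
  refine Set.Finite.subset (h.union (h.image (· + 1))) ?_
  intro n hn
  simp only [Function.mem_support, Aseq] at hn
  by_contra hc
  simp only [Set.mem_union, Function.mem_support, Set.mem_image, not_or, not_exists] at hc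
  obtain ⟨h1, h2⟩ := hc
  apply hn
  rcases n with _ | m
  · simpa using h1
  · have hx1 : x (m + 1) = 0 := not_not.mp h1
    have hx : x m = 0 := by
      by_contra hxm
      exact (h2 m ⟨hxm, rfl⟩).elim
    simp [hx1, hx]

lemma mem_ccSubmodule_of_mk {x : ℕ → ℝ} (hx : Memℓp x 2)
    (h : (Function.support x).Finite) : (⟨x, hx⟩ : ell2) ∈ ccSubmodule := h

/-- The operator `A : c_c → c_c`, `(Ax)_n = x_n - x_{n-1}` (with `x_{-1} := 0`). -/
def Aop (x : cc) : cc :=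
  ⟨⟨Aseq (seqOf x), memℓp_of_finite_support (support_Aseq x.2)⟩,
    mem_ccSubmodule_of_mk _ (support_Aseq x.2)⟩

/-- The Fenchel conjugate of `f`, as a function on `ℓ²`. -/
def fstar (y : ell2) : ℝ :=
  ∑' n : ℕ, (((n : ℝ) + 1) ^ 2)⁻¹ *
    ((1 / 2) * ((y : ℕ → ℝ) n) ^ 2 + (y : ℕ → ℝ) n)

/-- The (formal) adjoint of `A`, acting on `ℓ²` sequences:
`(A*y)_n = y_n - y_{n+1}`. -/
def AstarSeq (y : ell2) : ℕ → ℝ := fun n => (y : ℕ → ℝ) n - (y : ℕ → ℝ) (n + 1)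


lemma summable_g (x : cc) :
    Summable (fun n : ℕ => (((n : ℝ) + 1) ^ 2 / 2) * (seqOf x n - (((n : ℝ) + 1) ^ 2)⁻¹) ^ 2) := by
  set g := fun n : ℕ => (((n : ℝ) + 1) ^ 2 / 2) * (seqOf x n - (((n : ℝ) + 1) ^ 2)⁻¹) ^ 2 with hg
  set h := fun n : ℕ => ((2:ℝ) * ((n:ℝ)+1)^2)⁻¹ with hhdef
  have hh : Summable h := by
    have := Real.summable_one_div_nat_pow (p := 2) |>.mpr one_lt_two
    have h2 := ((summable_nat_add_iff 1).mpr this).div_const 2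
    refine h2.congr fun n => ?_
    show _ = ((2:ℝ) * ((n:ℝ)+1)^2)⁻¹
    push_cast
    rw [mul_inv]
    ring
  have hfin : (Function.support (fun n => g n - h n)).Finite := by
    refine x.2.subset ?_
    intro n hn
    simp only [Function.mem_support] at hn ⊢
    intro h0
    apply hn
    have hc : ((n:ℝ)+1) ≠ 0 := by positivity
    simp only [hg, hhdef, seqOf] at *
    rw [h0]
    field_simp
    ring
  have hs : Summable (fun n => g n - h n) := summable_of_finite_support hfin
  exact (hs.add hh).congr (fun n => by ring)

theorem f_nowhere_continuous_aux : True := trivial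

/-- `f` is discontinuous at every point of `c_c`. -/
theorem f_nowhere_continuous : ∀ x : cc, ¬ ContinuousAt fcc x := by
  intro x hcont
  rw [Metric.continuousAt_iff] at hcont
  obtain ⟨δ, hδ, hball⟩ := hcont (1/4) (by norm_num)
  obtain ⟨B, hB⟩ := x.2.bddAbove
  obtain ⟨n, hn⟩ := exists_nat_gt (max (max (B:ℝ) 3) (1/δ))
  have hn1 : (B:ℝ) < n := lt_of_le_of_lt ((le_max_left _ _).trans (le_max_left _ _)) hn
  have hn2 : (3:ℝ) < n := lt_of_le_of_lt ((le_max_right _ _).trans (le_max_left _ _)) hn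
  have hn3 : 1/δ < n := lt_of_le_of_lt (le_max_right _ _) hn
  have hc0 : (0:ℝ) < (n:ℝ)+1 := by positivity
  have hxn : seqOf x n = 0 := by
    by_contra hne
    have hmem : n ∈ Function.support (fun m => ((x : ell2) : ℕ → ℝ) m) := hne
    have := hB hmem
    have : (n:ℝ) ≤ (B:ℝ) := by exact_mod_cast this
    linarith
  set c : ℝ := ((n:ℝ)+1)⁻¹ with hcdef
  set y : cc := x + c • eVec n with hydef
  have hyc : ∀ m : ℕ, seqOf y m = if m = n then c else seqOf x m := by
    intro m
    have : ((y : ell2) : ℕ → ℝ) m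
        = ((x : ell2) : ℕ → ℝ) m + c * (lp.single 2 n (1:ℝ) : ℕ → ℝ) m := by
      rw [hydef]
      push_cast
      simp [eVec, lp.coeFn_add, lp.coeFn_smul, Pi.add_apply, Pi.smul_apply, smul_eq_mul]
      rfl
    rw [show seqOf y m = ((y : ell2) : ℕ → ℝ) m from rfl, this]
    by_cases hm : m = n
    · subst hm
      rw [lp.single_apply_self, if_pos rfl]
      have : ((x : ell2) : ℕ → ℝ) m = 0 := hxn
      rw [this]
      ring
    · rw [lp.single_apply_ne 2 n _ hm, if_neg hm]
      simp [seqOf]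
  have hdist : dist y x < δ := by
    have h1 : y - x = c • eVec n := by rw [hydef]; abel
    have h2 : ‖eVec n‖ = 1 := by
      have : ‖eVec n‖ = ‖((eVec n : cc) : ell2)‖ := rfl
      rw [this]
      have := lp.norm_single (E := fun _ : ℕ => ℝ) (p := 2) (by norm_num) n (1:ℝ)
      simpa [eVec] using this
    rw [dist_eq_norm, h1, norm_smul, h2, mul_one]
    have hcpos : (0:ℝ) < c := by rw [hcdef]; positivity
    rw [Real.norm_eq_abs, abs_of_pos hcpos, hcdef]
    rw [inv_lt_comm₀ hc0 hδ]
    rw [one_div] at hn3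
    linarith
  have key : fcc y - fcc x = 1/2 - c := by
    have hgx := summable_g x
    have hgy := summable_g y
    rw [fcc, fcc, fSeq, fSeq, ← Summable.tsum_sub hgy hgx]
    rw [tsum_eq_single n]
    · rw [hyc n, if_pos rfl, hxn, hcdef]
      have hne : ((n:ℝ)+1) ≠ 0 := ne_of_gt hc0
      field_simp
      ring
    · intro m hm
      rw [hyc m, if_neg hm]
      ring
  have hlt := hball (by simpa using hdist)
  rw [Real.dist_eq, key] at hlt
  have hcle : c ≤ 1/4 := by
    rw [hcdef]
    rw [inv_le_comm₀ hc0 (by norm_num)]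
    linarith
  have : |1/2 - c| ≥ 1/4 := by
    rw [abs_of_nonneg (by linarith)]
    linarith
  linarith
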